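/- Let τ > 0 and α > 0. The closed-loop characteristic polynomial of the symmetrical-optimum SRF-PLL, p(s) = τ·s³ + s² + (1/(ατ))·s + 1/(α³τ²), is Hurwitz (every complex root z of p satisfies Re z < 0) if and only if α > 1. -/

import Mathlib

open Complex

/-- Hurwitz stability of the symmetrical-optimum SRF-PLL closed loop: the
characteristic polynomial `p(s) = τs³ + s² + s/(ατ) + 1/(α³τ²)` has all its
complex roots in the open left half-plane if and only if `α > 1`. -/
theorem srf_pll_characteristic_hurwitz_iff (τ α : ℝ) (hτ : 0 < τ) (hα : 0 < α) :
    (∀ z : ℂ, (τ : ℂ) * z ^ 3 + z ^ 2 + ((1 / (α * τ) : ℝ) : ℂ) * z +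
        ((1 / (α ^ 3 * τ ^ 2) : ℝ) : ℂ) = 0 → z.re < 0) ↔ 1 < α := by
  have hτ0 : (τ : ℂ) ≠ 0 := by exact_mod_cast hτ.ne'
  have hα0 : (α : ℂ) ≠ 0 := by exact_mod_cast hα.ne'
  -- key factorization: α³τ²·p(z) = (ατz + 1)(α²τ²z² + (α²-α)τz + 1)
  have key : ∀ z : ℂ, (α : ℂ) ^ 3 * τ ^ 2 * ((τ : ℂ) * z ^ 3 + z ^ 2 +
      ((1 / (α * τ) : ℝ) : ℂ) * z + ((1 / (α ^ 3 * τ ^ 2) : ℝ) : ℂ)) =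
      ((α : ℂ) * τ * z + 1) * ((α : ℂ) ^ 2 * τ ^ 2 * z ^ 2 + ((α : ℂ) ^ 2 - α) * τ * z + 1) := by
    intro z
    push_cast
    field_simp
    ring
  constructor
  · intro h
    by_contra hle
    push_neg at hle
    -- α ≤ 1 : exhibit a bad root of the quadratic factor
    obtain ⟨B, hBdef⟩ : ∃ B : ℝ, B = 1 - 1 / α := ⟨_, rfl⟩
    obtain ⟨C, hCdef⟩ : ∃ C : ℝ, C = 1 / α ^ 2 := ⟨_, rfl⟩
    have hC : 0 < C := by rw [hCdef]; positivity
    have hB : B ≤ 0 := by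
      rw [hBdef]
      have h1 : 1 ≤ 1 / α := by rw [le_div_iff₀ hα]; linarith
      linarith
    obtain ⟨u, hu, hre⟩ : ∃ u : ℂ, u ^ 2 + (B : ℂ) * u + (C : ℂ) = 0 ∧ 0 ≤ u.re := by
      by_cases hD : 0 ≤ B ^ 2 - 4 * C
      · refine ⟨(((-B + Real.sqrt (B ^ 2 - 4 * C)) / 2 : ℝ) : ℂ), ?_, ?_⟩
        · have hs : (Real.sqrt (B ^ 2 - 4 * C) : ℝ) ^ 2 = B ^ 2 - 4 * C := Real.sq_sqrt hD
          have hs' : ((Real.sqrt (B ^ 2 - 4 * C) : ℝ) : ℂ) ^ 2 = (B : ℂ) ^ 2 - 4 * C := by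
            exact_mod_cast congrArg (fun x : ℝ => (x : ℂ)) hs
          push_cast
          linear_combination (1 / 4 : ℂ) * hs'
        · simp only [Complex.ofReal_re]
          have h1 : 0 ≤ Real.sqrt (B ^ 2 - 4 * C) := Real.sqrt_nonneg _
          linarith
      · push_neg at hD
        refine ⟨(-B / 2 : ℝ) + Complex.I * ((Real.sqrt (4 * C - B ^ 2) / 2 : ℝ) : ℂ), ?_, ?_⟩
        · have hs : (Real.sqrt (4 * C - B ^ 2) : ℝ) ^ 2 = 4 * C - B ^ 2 :=
            Real.sq_sqrt (by linarith)
          have hs' : ((Real.sqrt (4 * C - B ^ 2) : ℝ) : ℂ) ^ 2 = 4 * (C : ℂ) - (B : ℂ) ^ 2 := by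
            exact_mod_cast congrArg (fun x : ℝ => (x : ℂ)) hs
          push_cast
          linear_combination (((Real.sqrt (4 * C - B ^ 2) : ℝ) : ℂ) ^ 2 / 4) * Complex.I_sq
            + (-(1 : ℂ) / 4) * hs'
        · simp only [Complex.add_re, Complex.ofReal_re, Complex.mul_re, Complex.I_re,
            Complex.I_im, Complex.ofReal_im, zero_mul, one_mul, mul_zero, sub_zero, zero_sub]
          linarith
    -- the quadratic factor vanishes at z = u/τ
    have hX : (α : ℂ) ^ 2 * u ^ 2 + ((α : ℂ) ^ 2 - α) * u + 1 = 0 := by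
      rw [hBdef, hCdef] at hu
      push_cast at hu
      field_simp at hu
      have hX' : (α : ℂ) * ((α : ℂ) ^ 2 * u ^ 2 + ((α : ℂ) ^ 2 - α) * u + 1) = 0 := by
        linear_combination (α : ℂ) * hu
      exact (mul_eq_zero.mp hX').resolve_left hα0
    have hquad : (α : ℂ) ^ 2 * τ ^ 2 * (u / τ) ^ 2 + ((α : ℂ) ^ 2 - α) * τ * (u / τ) + 1 = 0 := by
      field_simp
      linear_combination hX
    have hz : (τ : ℂ) * (u / τ) ^ 3 + (u / τ) ^ 2 + ((1 / (α * τ) : ℝ) : ℂ) * (u / τ) +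
        ((1 / (α ^ 3 * τ ^ 2) : ℝ) : ℂ) = 0 := by
      have hk := key (u / τ)
      rw [hquad, mul_zero] at hk
      have hne : (α : ℂ) ^ 3 * (τ : ℂ) ^ 2 ≠ 0 :=
        mul_ne_zero (pow_ne_zero 3 hα0) (pow_ne_zero 2 hτ0)
      exact (mul_eq_zero.mp hk).resolve_left hne
    have hlt := h (u / τ) hz
    rw [Complex.div_re] at hlt
    simp only [Complex.ofReal_re, Complex.ofReal_im, mul_zero, zero_div, add_zero] at hlt
    have hns : 0 < Complex.normSq (τ : ℂ) := by
      simpa [Complex.normSq_apply] using mul_pos hτ hτ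
    exact absurd (div_nonneg (mul_nonneg hre hτ.le) hns.le) (not_le.mpr hlt)
  · intro hα1 z hz
    have hk := key z
    rw [hz, mul_zero] at hk
    rcases mul_eq_zero.mp hk.symm with h1 | h2
    · -- ατz + 1 = 0, so z = -1/(ατ)
      have hz' : z = -(1 / ((α : ℂ) * τ)) := by
        field_simp at h1 ⊢
        linear_combination h1
      have hcast : -(1 / ((α : ℂ) * τ)) = ((-(1 / (α * τ)) : ℝ) : ℂ) := by push_cast; ring
      rw [hz', hcast, Complex.ofReal_re]
      have : (0 : ℝ) < 1 / (α * τ) := by positivity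
      linarith
    · -- quadratic factor: a₂ z² + a₁ z + 1 = 0 with a₂, a₁ > 0
      have ha2 : (0 : ℝ) < α ^ 2 * τ ^ 2 := by positivity
      have ha1 : (0 : ℝ) < (α ^ 2 - α) * τ := by
        have h5 := mul_pos (mul_pos hα (show (0:ℝ) < α - 1 by linarith)) hτ
        nlinarith
      have hc2 : ((α : ℂ) ^ 2 * τ ^ 2 : ℂ) = ((α ^ 2 * τ ^ 2 : ℝ) : ℂ) := by push_cast; ring
      have hc1 : (((α : ℂ) ^ 2 - α) * τ : ℂ) = (((α ^ 2 - α) * τ : ℝ) : ℂ) := by push_cast; ring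
      rw [hc2, hc1] at h2
      set a2 : ℝ := α ^ 2 * τ ^ 2
      set a1 : ℝ := (α ^ 2 - α) * τ
      have hRe := congrArg Complex.re h2
      have hIm := congrArg Complex.im h2
      simp only [pow_two, Complex.add_re, Complex.add_im, Complex.mul_re, Complex.mul_im,
        Complex.ofReal_re, Complex.ofReal_im, Complex.one_re, Complex.one_im, Complex.zero_re,
        Complex.zero_im, zero_mul, mul_zero, sub_zero, zero_add, add_zero, zero_sub] at hRe hIm
      by_cases hy : z.im = 0
      · rw [hy] at hRe
        by_contra hx
        push_neg at hx
        nlinarith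
      · have h2x : 2 * a2 * z.re + a1 = 0 := by
          have h3 : z.im * (a2 * (z.re + z.re) + a1) = 0 := by ring_nf; ring_nf at hIm; linarith
          have h4 := (mul_eq_zero.mp h3).resolve_left hy
          linarith
        nlinarith
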